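/- In an IO-marked tile assembly system at temperature 2, every non-null glue exposed on the perimeter of any producible assembly has an output marking. -/

import Mathlib

/-!
STATEMENT 0: In an IO-marked tile assembly system at temperature 2, every non-null
glue exposed on the perimeter of any producible assembly has an output marking.
-/

inductive Dir | N | E | S | W
deriving DecidableEq

instance : Fintype Dir :=
  ⟨{.N, .E, .S, .W}, by intro d; cases d <;> decide⟩

def Dir.opp : Dir → Dir
  | .N => .S | .S => .N | .E => .W | .W => .E

def Dir.vec : Dir → ℤ × ℤ
  | .N => (0, 1) | .S => (0, -1) | .E => (1, 0) | .W => (-1, 0)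

structure Glue where
  label : String
  strength : ℕ
deriving DecidableEq

/-- A tile type: a glue on each of its 4 sides. -/
abbrev Tile := Dir → Glue

/-- A configuration: a partial arrangement of tiles on the plane. -/
abbrev Config := ℤ × ℤ → Option Tile

attribute [local instance] Classical.propDecidable

/-- `mark g = some d` means glue `g` bears the input marking for direction `d`
(which coincides with the output marking for the opposite direction `d.opp`);
`mark g = none` means `g` carries no marking. -/
def inputSides (mark : Glue → Option Dir) (t : Tile) : Finset Dir :=
  Finset.univ.filter (fun d => mark (t d) = some d)

/-- A tile is IO-marked (with a minimal input set): its input-marked glues are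
non-null and their strengths sum to at least 2, removing any input glue drops
the total input strength below 2, and every non-null glue is either input-marked
or output-marked. -/
def IOMarked (mark : Glue → Option Dir) (t : Tile) : Prop :=
  (∀ d ∈ inputSides mark t, (t d).strength ≠ 0) ∧
  2 ≤ ∑ d ∈ inputSides mark t, (t d).strength ∧
  (∀ d ∈ inputSides mark t, ∑ d' ∈ (inputSides mark t).erase d, (t d').strength < 2) ∧
  (∀ d, (t d).strength ≠ 0 → mark (t d) = some d ∨ mark (t d) = some d.opp)

/-- The sides of `t`, placed at `p`, whose (non-null) glues bind matching glues
of adjacent tiles of `α` (glues bind only when label and strength are equal). -/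
def boundSides (α : Config) (p : ℤ × ℤ) (t : Tile) : Finset Dir :=
  Finset.univ.filter (fun d =>
    (t d).strength ≠ 0 ∧ ∃ t', α (p + d.vec) = some t' ∧ t' d.opp = t d)

/-- Temperature-2 attachment: a tile of the tile set may attach at an empty
location if its bound glues have total strength at least 2. -/
def Attaches (T : Set Tile) (α : Config) (p : ℤ × ℤ) (t : Tile) : Prop :=
  t ∈ T ∧ α p = none ∧ 2 ≤ ∑ d ∈ boundSides α p t, (t d).strength

/-- Producible assemblies: reachable from the seed by single-tile attachments. -/
inductive Producible (T : Set Tile) (σ : Config) : Config → Prop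
  | seed : Producible T σ σ
  | attach {α : Config} {p : ℤ × ℤ} {t : Tile} :
      Producible T σ α → Attaches T α p t →
      Producible T σ (Function.update α p (some t))

/-- Every non-null glue exposed on the perimeter of `α` is output-marked. -/
def OutputMarkedPerimeter (mark : Glue → Option Dir) (α : Config) : Prop :=
  ∀ p t d, α p = some t → α (p + d.vec) = none → (t d).strength ≠ 0 →
    mark (t d) = some d.opp

/-- In an IO TAS (all tiles IO-marked with minimal input sets, and all non-null
glues on the seed perimeter output-marked), every non-null glue exposed on the
perimeter of any producible assembly has an output marking. -/
theorem io_tas_perimeter_output_marked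
    (mark : Glue → Option Dir) (T : Set Tile) (σ : Config)
    (hT : ∀ t ∈ T, IOMarked mark t)
    (hσ : OutputMarkedPerimeter mark σ) :
    ∀ α, Producible T σ α → OutputMarkedPerimeter mark α := by
  intro α hα
  induction hα with
  | seed => exact hσ
  | @attach α p t hprod hatt ih =>
    obtain ⟨htT, hpnone, hstr⟩ := hatt
    obtain ⟨hnn, hsum, hmin, hio⟩ := hT t htT
    have hsub : boundSides α p t ⊆ inputSides mark t := by
      intro d hd
      simp only [boundSides, Finset.mem_filter, Finset.mem_univ, true_and] at hd
      obtain ⟨hs, t', ht', heq⟩ := hd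
      have hvec : p + d.vec + d.opp.vec = p := by
        cases d <;> simp [Dir.vec, Dir.opp, Prod.ext_iff]
      have hexp : α (p + d.vec + d.opp.vec) = none := by rw [hvec]; exact hpnone
      have hmk := ih (p + d.vec) t' d.opp ht' hexp (by rw [heq]; exact hs)
      rw [heq] at hmk
      have hoo : d.opp.opp = d := by cases d <;> rfl
      rw [hoo] at hmk
      simp [inputSides, hmk]
    have heqset : inputSides mark t ⊆ boundSides α p t := by
      intro d hd
      by_contra hnd
      have hsub2 : boundSides α p t ⊆ (inputSides mark t).erase d := fun x hx =>
        Finset.mem_erase.mpr ⟨fun h => hnd (h ▸ hx), hsub hx⟩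
      have h2 : 2 ≤ ∑ d' ∈ (inputSides mark t).erase d, (t d').strength :=
        le_trans hstr (Finset.sum_le_sum_of_subset hsub2)
      exact absurd h2 (not_le.mpr (hmin d hd))
    intro q t' d hq hqd hsnz
    by_cases hqp : q = p
    · subst hqp
      rw [Function.update_self] at hq
      injection hq with hq
      subst hq
      rcases hio d hsnz with hin | hout
      · exfalso
        have hd : d ∈ inputSides mark t := by simp [inputSides, hin]
        have hb := heqset hd
        simp only [boundSides, Finset.mem_filter, Finset.mem_univ, true_and] at hb
        obtain ⟨_, t'', ht'', _⟩ := hb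
        have hne : q + d.vec ≠ q := by
          cases d <;> simp [Dir.vec, Prod.ext_iff]
        rw [Function.update_of_ne hne, ht''] at hqd
        exact Option.some_ne_none _ hqd
      · exact hout
    · rw [Function.update_of_ne hqp] at hq
      by_cases hqdp : q + d.vec = p
      · rw [hqdp, Function.update_self] at hqd
        exact absurd hqd (Option.some_ne_none _)
      · rw [Function.update_of_ne hqdp] at hqd
        exact ih q t' d hq hqd hsnz
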